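/- For M > log 3, the set A_M = { α ∈ ℝ \ ℚ : log m_{k+1}(α)/m_k(α) ≤ M for all k ≥ 0 } satisfies ⋂_{n/m} { α : |α − n/m| ≥ 1/(m e^{Mm}) } ∩ (ℝ\ℚ) ⊆ A_M ⊆ ⋂_{n/m} { α : |α − n/m| > 1/(2m e^{Mm}) }, where the intersections run over all rationals n/m in lowest terms with m ≥ 1. -/

import Mathlib

/-- The Gauss-map iterates for the continued fraction expansion of `α`. -/
noncomputable def cfXi (α : ℝ) : ℕ → ℝ
  | 0 => Int.fract α
  | k + 1 => Int.fract (cfXi α k)⁻¹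

/-- The partial quotients of the continued fraction expansion of `α`. -/
noncomputable def cfA (α : ℝ) : ℕ → ℤ
  | 0 => ⌊α⌋
  | k + 1 => ⌊(cfXi α k)⁻¹⌋

/-- Denominators `m_k` of the convergents: `m_0 = 1`, `m_1 = a_1`,
`m_{k+2} = a_{k+2} m_{k+1} + m_k`. -/
noncomputable def cfM (α : ℝ) : ℕ → ℤ
  | 0 => 1
  | 1 => cfA α 1
  | k + 2 => cfA α (k + 2) * cfM α (k + 1) + cfM α k

/-- Numerators `n_k` of the convergents: `n_0 = a_0`, `n_1 = a_1 a_0 + 1`,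
`n_{k+2} = a_{k+2} n_{k+1} + n_k`. -/
noncomputable def cfN (α : ℝ) : ℕ → ℤ
  | 0 => cfA α 0
  | 1 => cfA α 1 * cfA α 0 + 1
  | k + 2 => cfA α (k + 2) * cfN α (k + 1) + cfN α k

/-- auxiliary: the error `m_k α - n_k`. -/
noncomputable def cfE (α : ℝ) (k : ℕ) : ℝ := (cfM α k : ℝ) * α - (cfN α k : ℝ)

section CF
variable {α : ℝ} (hα : Irrational α)
include hα

lemma cfXi_props : ∀ k, Irrational (cfXi α k) ∧ 0 < cfXi α k ∧ cfXi α k < 1 := by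
  have key : ∀ x : ℝ, Irrational x → Irrational (Int.fract x) ∧ 0 < Int.fract x ∧
      Int.fract x < 1 := by
    intro x hx
    refine ⟨by rw [Int.fract]; exact hx.sub_intCast _, ?_, Int.fract_lt_one x⟩
    exact Int.fract_pos.2 (hx.ne_int ⌊x⌋)
  intro k
  induction k with
  | zero => exact key α hα
  | succ k ih => exact key _ ih.1.inv

lemma cfXi_pos (k : ℕ) : 0 < cfXi α k := (cfXi_props hα k).2.1

omit hα in
lemma cfA_eq (k : ℕ) : (cfA α (k + 1) : ℝ) = (cfXi α k)⁻¹ - cfXi α (k + 1) := by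
  show ((⌊(cfXi α k)⁻¹⌋ : ℤ) : ℝ) = _
  rw [show cfXi α (k + 1) = Int.fract (cfXi α k)⁻¹ from rfl]
  rw [Int.fract]; ring

lemma cfA_succ_pos (k : ℕ) : 1 ≤ cfA α (k + 1) := by
  have h1 := cfXi_pos hα k
  have h2 := (cfXi_props hα k).2.2
  have : (1 : ℝ) < (cfXi α k)⁻¹ := (one_lt_inv₀ h1).2 h2
  show 1 ≤ ⌊(cfXi α k)⁻¹⌋
  exact Int.le_floor.2 (by exact_mod_cast this.le)

lemma cfM_pos : ∀ k, 1 ≤ cfM α k := by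
  have base : ∀ k, 1 ≤ cfM α k ∧ 1 ≤ cfM α (k + 1) := by
    intro k
    induction k with
    | zero => exact ⟨le_refl 1, cfA_succ_pos hα 0⟩
    | succ k ih =>
      refine ⟨ih.2, ?_⟩
      show 1 ≤ cfA α (k + 2) * cfM α (k + 1) + cfM α k
      nlinarith [cfA_succ_pos hα (k + 1), ih.1, ih.2]
  exact fun k => (base k).1

lemma cfM_mono (k : ℕ) : cfM α k ≤ cfM α (k + 1) := by
  cases k with
  | zero => exact cfA_succ_pos hα 0
  | succ k =>
    show cfM α (k + 1) ≤ cfA α (k + 2) * cfM α (k + 1) + cfM α k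
    nlinarith [cfA_succ_pos hα (k + 1), cfM_pos hα k, cfM_pos hα (k + 1)]

lemma cfM_two (k : ℕ) : 2 * cfM α k ≤ cfM α (k + 2) := by
  show 2 * cfM α k ≤ cfA α (k + 2) * cfM α (k + 1) + cfM α k
  nlinarith [cfA_succ_pos hα (k + 1), cfM_pos hα k, cfM_pos hα (k + 1), cfM_mono hα k]

omit hα in
lemma cfE_zero : cfE α 0 = cfXi α 0 := by
  rw [cfE, show cfM α 0 = 1 from rfl, show cfN α 0 = ⌊α⌋ from rfl,
    show cfXi α 0 = Int.fract α from rfl, Int.fract]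
  push_cast
  ring

lemma cfAXi (k : ℕ) : (cfA α (k + 1) : ℝ) * cfXi α k = 1 - cfXi α (k + 1) * cfXi α k := by
  have h0 := (cfXi_pos hα k).ne'
  rw [cfA_eq k]
  field_simp

lemma cfE_succ : ∀ k, cfE α (k + 1) = -(cfXi α (k + 1)) * cfE α k := by
  intro k
  induction k with
  | zero =>
    have ha0 : ((cfA α 0 : ℤ) : ℝ) = α - cfXi α 0 := by
      show ((⌊α⌋ : ℤ) : ℝ) = α - Int.fract α
      rw [Int.fract]; ring
    have h0 := cfAXi hα 0
    show (cfM α 1 : ℝ) * α - (cfN α 1 : ℝ) = _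
    rw [show cfM α 1 = cfA α 1 from rfl, show cfN α 1 = cfA α 1 * cfA α 0 + 1 from rfl,
      cfE_zero]
    push_cast
    linear_combination h0 - (cfA α 1 : ℝ) * ha0
  | succ k ih =>
    have h := cfAXi hα (k + 1)
    have hrec : cfE α (k + 2) = (cfA α (k + 2) : ℝ) * cfE α (k + 1) + cfE α k := by
      show (cfM α (k + 2) : ℝ) * α - (cfN α (k + 2) : ℝ) = _
      rw [show cfM α (k + 2) = cfA α (k + 2) * cfM α (k + 1) + cfM α k from rfl,
        show cfN α (k + 2) = cfA α (k + 2) * cfN α (k + 1) + cfN α k from rfl]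
      push_cast
      show _ = (cfA α (k+2) : ℝ) * ((cfM α (k+1) : ℝ) * α - _) + ((cfM α k : ℝ) * α - _)
      ring
    rw [hrec, ih]
    linear_combination (-(cfE α k)) * h

lemma cfE_ne : ∀ k, cfE α k ≠ 0 := by
  intro k
  induction k with
  | zero => rw [cfE_zero]; exact (cfXi_pos hα 0).ne'
  | succ k ih =>
    rw [cfE_succ hα k]
    exact mul_ne_zero (neg_ne_zero.2 (cfXi_pos hα (k + 1)).ne') ih

lemma cfE_alt (k : ℕ) : cfE α k * cfE α (k + 1) < 0 := by
  rw [cfE_succ hα k]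
  have h1 := cfXi_pos hα (k + 1)
  have h2 : 0 < cfE α k * cfE α k := mul_self_pos.2 (cfE_ne hα k)
  nlinarith

omit hα in
lemma cfDet : ∀ k, cfN α (k + 1) * cfM α k - cfN α k * cfM α (k + 1) = (-1) ^ k := by
  intro k
  induction k with
  | zero =>
    show (cfA α 1 * cfA α 0 + 1) * 1 - cfA α 0 * cfA α 1 = 1
    ring
  | succ k ih =>
    show cfN α (k + 2) * cfM α (k + 1) - cfN α (k + 1) * cfM α (k + 2) = _
    rw [show cfM α (k + 2) = cfA α (k + 2) * cfM α (k + 1) + cfM α k from rfl,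
      show cfN α (k + 2) = cfA α (k + 2) * cfN α (k + 1) + cfN α k from rfl]
    rw [pow_succ]
    linear_combination (-1 : ℤ) * ih

lemma cfGcd (k : ℕ) : Int.gcd (cfN α k) (cfM α k) = 1 := by
  rw [← Int.isCoprime_iff_gcd_eq_one]
  have h := cfDet (α := α) k
  have hs : ((-1 : ℤ) ^ k) * ((-1 : ℤ) ^ k) = 1 := by
    rw [← pow_add]
    exact Even.neg_one_pow ⟨k, by ring⟩
  exact ⟨-(-1 : ℤ) ^ k * cfM α (k + 1), (-1 : ℤ) ^ k * cfN α (k + 1),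
    by linear_combination ((-1 : ℤ) ^ k) * h + hs⟩

omit hα in
lemma abs_add_of_mul_nonneg' {a b : ℝ} (h : 0 ≤ a * b) : |a + b| = |a| + |b| := by
  rcases abs_cases a with ⟨ha1, ha2⟩ | ⟨ha1, ha2⟩ <;>
  rcases abs_cases b with ⟨hb1, hb2⟩ | ⟨hb1, hb2⟩ <;>
  rcases abs_cases (a + b) with ⟨hc1, hc2⟩ | ⟨hc1, hc2⟩ <;> nlinarith

lemma cfIdentity (k : ℕ) :
    (cfM α (k + 1) : ℝ) * |cfE α k| + (cfM α k : ℝ) * |cfE α (k + 1)| = 1 := by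
  have hdet : (cfM α (k + 1) : ℝ) * cfE α k + (-(cfM α k : ℝ)) * cfE α (k + 1)
      = (-1 : ℝ) ^ k := by
    have h := cfDet (α := α) k
    have h2 := congrArg (fun z : ℤ => (z : ℝ)) h
    push_cast at h2
    show (cfM α (k+1) : ℝ) * ((cfM α k : ℝ) * α - _) + _ * ((cfM α (k+1) : ℝ) * α - _) = _
    linear_combination h2
  have h1 : (0 : ℝ) < (cfM α k : ℝ) := by exact_mod_cast cfM_pos hα k
  have h2 : (0 : ℝ) < (cfM α (k + 1) : ℝ) := by exact_mod_cast cfM_pos hα (k + 1)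
  have hmul : 0 ≤ ((cfM α (k + 1) : ℝ) * cfE α k) * ((-(cfM α k : ℝ)) * cfE α (k + 1)) := by
    have h3 := cfE_alt hα k
    nlinarith [mul_pos h1 h2]
  have habs := abs_add_of_mul_nonneg' hmul
  rw [hdet] at habs
  rw [abs_mul, abs_mul, abs_neg, abs_of_pos h1, abs_of_pos h2] at habs
  rw [← habs]
  simp [abs_pow]

lemma cfUpper (k : ℕ) : (cfM α (k + 1) : ℝ) * |cfE α k| < 1 := by
  have h := cfIdentity hα k
  have h1 : (0 : ℝ) < (cfM α k : ℝ) := by exact_mod_cast cfM_pos hα k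
  have h2 : 0 < |cfE α (k + 1)| := abs_pos.2 (cfE_ne hα (k + 1))
  nlinarith

lemma cfLower (k : ℕ) : 1 / 2 < (cfM α (k + 1) : ℝ) * |cfE α k| := by
  have h := cfIdentity hα k
  have h1 : (0 : ℝ) < (cfM α k : ℝ) := by exact_mod_cast cfM_pos hα k
  have h2 : (0 : ℝ) < (cfM α (k + 2) : ℝ) := by exact_mod_cast cfM_pos hα (k + 2)
  have h3 := cfUpper hα (k + 1)
  have h4 : (2 : ℝ) * (cfM α k : ℝ) ≤ (cfM α (k + 2) : ℝ) := by exact_mod_cast cfM_two hα k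
  have h5 : 0 ≤ |cfE α (k + 1)| := abs_nonneg _
  have h6 : (cfM α k : ℝ) * |cfE α (k + 1)| < 1 / 2 := by nlinarith
  linarith

lemma cfBest (k : ℕ) (n m : ℤ) (hm : 1 ≤ m) (hmk : m < cfM α (k + 1)) :
    |cfE α k| ≤ |(m : ℝ) * α - (n : ℝ)| := by
  have hD : (cfN α (k + 1) * cfM α k - cfN α k * cfM α (k + 1))
      * (cfN α (k + 1) * cfM α k - cfN α k * cfM α (k + 1)) = 1 := by
    rw [cfDet (α := α) k, ← pow_add]
    exact Even.neg_one_pow ⟨k, by ring⟩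
  set D : ℤ := cfN α (k + 1) * cfM α k - cfN α k * cfM α (k + 1) with hDdef
  set x : ℤ := D * (m * cfN α (k + 1) - n * cfM α (k + 1)) with hxdef
  set y : ℤ := D * (n * cfM α k - m * cfN α k) with hydef
  have hx : x * cfM α k + y * cfM α (k + 1) = m := by
    rw [hxdef, hydef, hDdef]; rw [hDdef] at hD
    linear_combination m * hD
  have hy : x * cfN α k + y * cfN α (k + 1) = n := by
    rw [hxdef, hydef, hDdef]; rw [hDdef] at hD
    linear_combination n * hD
  have hE : (m : ℝ) * α - (n : ℝ) = (x : ℝ) * cfE α k + (y : ℝ) * cfE α (k + 1) := by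
    have hx' := congrArg (fun z : ℤ => (z : ℝ)) hx
    have hy' := congrArg (fun z : ℤ => (z : ℝ)) hy
    push_cast at hx' hy'
    simp only [cfE]
    linear_combination hy' - α * hx'
  have hMk := cfM_pos hα k
  have hMk1 := cfM_pos hα (k + 1)
  rcases eq_or_ne y 0 with hy0 | hy0
  · rw [hy0] at hx
    simp at hx
    have hx1 : 1 ≤ x := by nlinarith
    rw [hE, hy0]
    push_cast
    rw [zero_mul, add_zero, abs_mul]
    have hxx : (1 : ℝ) ≤ |(x : ℝ)| := by
      rw [← Int.cast_abs]
      exact_mod_cast le_trans hx1 (le_abs_self x)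
    nlinarith [abs_nonneg (cfE α k)]
  · rcases eq_or_ne x 0 with hx0 | hx0
    · rw [hx0] at hx
      simp at hx
      have : 1 ≤ y := by nlinarith
      nlinarith
    · have hxy : x * y < 0 := by
        rcases lt_or_gt_of_ne hx0 with hx1 | hx1 <;> rcases lt_or_gt_of_ne hy0 with hy1 | hy1
        · nlinarith
        · nlinarith
        · nlinarith
        · nlinarith
      have halt := cfE_alt hα k
      have hprod : 0 ≤ ((x : ℝ) * cfE α k) * ((y : ℝ) * cfE α (k + 1)) := by
        have hxy' : ((x * y : ℤ) : ℝ) < 0 := by exact_mod_cast hxy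
        push_cast at hxy'
        nlinarith
      rw [hE, abs_add_of_mul_nonneg' hprod, abs_mul, abs_mul]
      have hx1 : (1 : ℝ) ≤ |(x : ℝ)| := by
        rw [← Int.cast_abs]
        exact_mod_cast Int.one_le_abs hx0
      nlinarith [abs_nonneg (cfE α k), abs_nonneg (cfE α (k + 1)),
        mul_nonneg (abs_nonneg ((y : ℝ))) (abs_nonneg (cfE α (k + 1)))]

lemma cfM_unbounded : ∀ j : ℕ, (j : ℤ) + 1 ≤ cfM α (2 * j) := by
  intro j
  induction j with
  | zero => simp [cfM]
  | succ j ih =>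
    have h1 : cfM α (2 * j) + 1 ≤ cfM α (2 * j + 2) := by
      have := cfM_two hα (2 * j)
      have := cfM_pos hα (2 * j)
      omega
    have h2 : 2 * (j + 1) = 2 * j + 2 := by ring
    rw [h2]
    push_cast
    omega

end CF

/-- For `M > log 3`, the set `A_M` of irrationals with `log m_{k+1}(α)/m_k(α) ≤ M` for all `k`
is sandwiched between the set of irrationals at distance `≥ 1/(m e^{Mm})` from every reduced
rational `n/m` and the set of numbers at distance `> 1/(2m e^{Mm})` from every reduced
rational `n/m`. -/
theorem AM_sandwich (M : ℝ) (hM : Real.log 3 < M) :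
    {α : ℝ | Irrational α ∧ ∀ (n : ℤ) (m : ℕ), 1 ≤ m → Int.gcd n (m : ℤ) = 1 →
        1 / ((m : ℝ) * Real.exp (M * m)) ≤ |α - (n : ℝ) / (m : ℝ)|} ⊆
      {α : ℝ | Irrational α ∧ ∀ k : ℕ, Real.log (cfM α (k + 1) : ℝ) / (cfM α k : ℝ) ≤ M} ∧
    {α : ℝ | Irrational α ∧ ∀ k : ℕ, Real.log (cfM α (k + 1) : ℝ) / (cfM α k : ℝ) ≤ M} ⊆
      {α : ℝ | ∀ (n : ℤ) (m : ℕ), 1 ≤ m → Int.gcd n (m : ℤ) = 1 →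
        1 / (2 * (m : ℝ) * Real.exp (M * m)) < |α - (n : ℝ) / (m : ℝ)|} := by
  have hM0 : 0 < M := lt_trans (Real.log_pos (by norm_num)) hM
  constructor
  · rintro α ⟨hirr, hfar⟩
    refine ⟨hirr, fun k => ?_⟩
    have hMk := cfM_pos hirr k
    have hMk1 := cfM_pos hirr (k + 1)
    have hmRpos : (0 : ℝ) < (cfM α k : ℝ) := by exact_mod_cast hMk
    have hmR1pos : (0 : ℝ) < (cfM α (k + 1) : ℝ) := by exact_mod_cast hMk1
    have hupper := cfUpper hirr k
    have hmnat : (((cfM α k).toNat : ℕ) : ℤ) = cfM α k := Int.toNat_of_nonneg (by omega)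
    have h1 : 1 ≤ (cfM α k).toNat := by omega
    have hg : Int.gcd (cfN α k) (((cfM α k).toNat : ℕ) : ℤ) = 1 := by
      rw [hmnat]; exact cfGcd hirr k
    have hfar' := hfar (cfN α k) (cfM α k).toNat h1 hg
    have hmR : (((cfM α k).toNat : ℕ) : ℝ) = (cfM α k : ℝ) := by exact_mod_cast hmnat
    rw [hmR] at hfar'
    have habs : |α - (cfN α k : ℝ) / (cfM α k : ℝ)| = |cfE α k| / (cfM α k : ℝ) := by
      have hstep : α - (cfN α k : ℝ) / (cfM α k : ℝ) = cfE α k / (cfM α k : ℝ) := by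
        rw [cfE]
        field_simp
        try ring
      rw [hstep, abs_div, abs_of_pos hmRpos]
    rw [habs] at hfar'
    have hexp : (0 : ℝ) < Real.exp (M * (cfM α k : ℝ)) := Real.exp_pos _
    rw [div_le_div_iff₀ (by positivity) hmRpos] at hfar'
    -- hfar' : 1 * (cfM α k) ≤ |cfE α k| * ((cfM α k) * exp (M * cfM α k))
    have hkey : 1 ≤ |cfE α k| * Real.exp (M * (cfM α k : ℝ)) := by nlinarith
    have hlt : (cfM α (k + 1) : ℝ) < Real.exp (M * (cfM α k : ℝ)) := by
      nlinarith [abs_nonneg (cfE α k)]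
    have hlog : Real.log (cfM α (k + 1) : ℝ) ≤ M * (cfM α k : ℝ) := by
      calc Real.log (cfM α (k + 1) : ℝ) ≤ Real.log (Real.exp (M * (cfM α k : ℝ))) :=
            Real.log_le_log hmR1pos hlt.le
        _ = M * (cfM α k : ℝ) := Real.log_exp _
    rw [div_le_iff₀ hmRpos]
    exact hlog
  · rintro α ⟨hirr, hbound⟩ n m h1m hg
    have hex : ∃ j, (m : ℤ) < cfM α j :=
      ⟨2 * m, by have := cfM_unbounded hirr m; omega⟩
    have hk0pos : 0 < Nat.find hex := by
      rcases Nat.eq_zero_or_pos (Nat.find hex) with h | h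
      · exfalso
        have := Nat.find_spec hex
        rw [h] at this
        have : (m : ℤ) < 1 := this
        omega
      · exact h
    set k : ℕ := Nat.find hex - 1 with hkdef
    have hk2 : (m : ℤ) < cfM α (k + 1) := by
      have := Nat.find_spec hex
      rwa [show k + 1 = Nat.find hex by omega]
    have hk1 : cfM α k ≤ (m : ℤ) := by
      have := Nat.find_min hex (show k < Nat.find hex by omega)
      omega
    have hmZ : (1 : ℤ) ≤ (m : ℤ) := by exact_mod_cast h1m
    have hbest := cfBest hirr k (n : ℤ) (m : ℤ) hmZ hk2
    have hlow := cfLower hirr k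
    have hMk := cfM_pos hirr k
    have hMk1 := cfM_pos hirr (k + 1)
    have hmRpos : (0 : ℝ) < (m : ℝ) := by exact_mod_cast h1m
    have hmkR : (0 : ℝ) < (cfM α k : ℝ) := by exact_mod_cast hMk
    have hmk1R : (0 : ℝ) < (cfM α (k + 1) : ℝ) := by exact_mod_cast hMk1
    have hlogk := hbound k
    rw [div_le_iff₀ hmkR] at hlogk
    have hexpk : (cfM α (k + 1) : ℝ) ≤ Real.exp (M * (cfM α k : ℝ)) := by
      calc (cfM α (k + 1) : ℝ) = Real.exp (Real.log (cfM α (k + 1) : ℝ)) :=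
            (Real.exp_log hmk1R).symm
        _ ≤ Real.exp (M * (cfM α k : ℝ)) := Real.exp_le_exp.2 hlogk
    have hle : (cfM α k : ℝ) ≤ (m : ℝ) := by exact_mod_cast hk1
    have hexpm : Real.exp (M * (cfM α k : ℝ)) ≤ Real.exp (M * (m : ℝ)) :=
      Real.exp_le_exp.2 (by nlinarith)
    have hEexp : (cfM α (k + 1) : ℝ) ≤ Real.exp (M * (m : ℝ)) := le_trans hexpk hexpm
    have hexppos : (0 : ℝ) < Real.exp (M * (m : ℝ)) := Real.exp_pos _
    -- 1/(2 exp(Mm)) < |cfE α k|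
    have hc1 : 1 / (2 * Real.exp (M * (m : ℝ))) < |cfE α k| := by
      rw [div_lt_iff₀ (by positivity)]
      nlinarith [abs_nonneg (cfE α k)]
    -- conclude
    show 1 / (2 * (m : ℝ) * Real.exp (M * m)) < |α - (n : ℝ) / (m : ℝ)|
    have habs : |α - (n : ℝ) / (m : ℝ)| = |(m : ℝ) * α - (n : ℝ)| / (m : ℝ) := by
      have hstep : α - (n : ℝ) / (m : ℝ) = ((m : ℝ) * α - (n : ℝ)) / (m : ℝ) := by
        field_simp
        try ring
      rw [hstep, abs_div, abs_of_pos hmRpos]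
    rw [habs]
    rw [lt_div_iff₀ hmRpos]
    have : 1 / (2 * (m : ℝ) * Real.exp (M * m)) * (m : ℝ) = 1 / (2 * Real.exp (M * m)) := by
      field_simp
    rw [this]
    calc 1 / (2 * Real.exp (M * (m : ℝ))) < |cfE α k| := hc1
      _ ≤ |(m : ℝ) * α - (n : ℝ)| := hbest
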